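/- Let k be a field, let r be a positive integer, and let α : Fin r → ℝ satisfy α i > 0 for every i. For nonzero f, g in MvPowerSeries (Fin r) k, the α-initial form of the product equals the product of the α-initial forms: in_α(f * g) = in_α(f) * in_α(g). -/

import Mathlib

open Classical in
/-- The α-weighted order `w_α(f) = inf { ∑ i, α i * β i : coeff β f ≠ 0 }` of a
multivariate formal power series. -/
noncomputable def wOrd {k : Type*} [Field k] {r : ℕ} (α : Fin r → ℝ)
    (f : MvPowerSeries (Fin r) k) : ℝ :=
  sInf {x : ℝ | ∃ β : Fin r →₀ ℕ, MvPowerSeries.coeff β f ≠ 0 ∧ x = ∑ i, α i * (β i : ℝ)}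

open Classical in
/-- The α-initial form `in_α(f)`: the part of `f` supported in weighted degree `w_α(f)`. -/
noncomputable def initForm {k : Type*} [Field k] {r : ℕ} (α : Fin r → ℝ)
    (f : MvPowerSeries (Fin r) k) : MvPowerSeries (Fin r) k :=
  fun β : Fin r →₀ ℕ =>
    if (∑ i, α i * (β i : ℝ)) = wOrd α f then MvPowerSeries.coeff β f else 0

namespace InitFormAux

variable {k : Type*} [Field k] {r : ℕ}

/-- The weight of an exponent vector. -/
noncomputable def w (α : Fin r → ℝ) (β : Fin r →₀ ℕ) : ℝ := ∑ i, α i * (β i : ℝ)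

lemma w_add (α : Fin r → ℝ) (β γ : Fin r →₀ ℕ) : w α (β + γ) = w α β + w α γ := by
  simp [w, Finsupp.add_apply, mul_add, Finset.sum_add_distrib]

lemma w_nonneg {α : Fin r → ℝ} (hα : ∀ i, 0 < α i) (β : Fin r →₀ ℕ) : 0 ≤ w α β :=
  Finset.sum_nonneg fun i _ => mul_nonneg (hα i).le (Nat.cast_nonneg _)

lemma coeff_initForm (α : Fin r → ℝ) (f : MvPowerSeries (Fin r) k) (β : Fin r →₀ ℕ) :
    MvPowerSeries.coeff β (initForm α f) =
      if w α β = wOrd α f then MvPowerSeries.coeff β f else 0 := by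
  rw [MvPowerSeries.coeff_apply]
  rfl

/-- The set of weights of `f`. -/
def S (α : Fin r → ℝ) (f : MvPowerSeries (Fin r) k) : Set ℝ :=
  {x : ℝ | ∃ β : Fin r →₀ ℕ, MvPowerSeries.coeff β f ≠ 0 ∧ x = w α β}

lemma wOrd_eq (α : Fin r → ℝ) (f : MvPowerSeries (Fin r) k) : wOrd α f = sInf (S α f) := rfl

lemma bddBelow_S {α : Fin r → ℝ} (hα : ∀ i, 0 < α i) (f : MvPowerSeries (Fin r) k) :
    BddBelow (S α f) := by
  refine ⟨0, fun x hx => ?_⟩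
  obtain ⟨β, -, rfl⟩ := hx
  exact w_nonneg hα β

lemma nonempty_S {α : Fin r → ℝ} {f : MvPowerSeries (Fin r) k} (hf : f ≠ 0) :
    (S α f).Nonempty := by
  have : ∃ β, MvPowerSeries.coeff β f ≠ 0 := by
    by_contra h
    push_neg at h
    exact hf (MvPowerSeries.ext fun β => by simp [h β])
  obtain ⟨β, hβ⟩ := this
  exact ⟨w α β, β, hβ, rfl⟩

lemma wOrd_le {α : Fin r → ℝ} (hα : ∀ i, 0 < α i) {f : MvPowerSeries (Fin r) k}
    {β : Fin r →₀ ℕ} (h : MvPowerSeries.coeff β f ≠ 0) : wOrd α f ≤ w α β :=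
  csInf_le (bddBelow_S hα f) ⟨β, h, rfl⟩

lemma coeff_eq_zero_of_lt {α : Fin r → ℝ} (hα : ∀ i, 0 < α i) {f : MvPowerSeries (Fin r) k}
    {β : Fin r →₀ ℕ} (h : w α β < wOrd α f) : MvPowerSeries.coeff β f = 0 := by
  by_contra hc
  exact absurd (wOrd_le hα hc) (not_le.mpr h)

lemma finite_le {α : Fin r → ℝ} (hα : ∀ i, 0 < α i) (C : ℝ) :
    {β : Fin r →₀ ℕ | w α β ≤ C}.Finite := by
  classical
  have hsub : {β : Fin r →₀ ℕ | w α β ≤ C} ⊆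
      ↑(Finset.Iic (Finsupp.equivFunOnFinite.symm fun i => ⌈C / α i⌉₊)) := by
    intro β hβ
    simp only [Finset.coe_Iic, Set.mem_Iic]
    intro i
    have h1 : α i * (β i : ℝ) ≤ C := by
      have := Finset.single_le_sum (f := fun j => α j * (β j : ℝ))
        (fun j _ => mul_nonneg (hα j).le (Nat.cast_nonneg _)) (Finset.mem_univ i)
      exact this.trans hβ
    have h2 : (β i : ℝ) ≤ C / α i := (le_div_iff₀ (hα i)).mpr (by linarith)
    simpa [Finsupp.equivFunOnFinite] using Nat.cast_le.mp (h2.trans (Nat.le_ceil _))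
  exact Set.Finite.subset (Finset.finite_toSet _) hsub

lemma exists_wOrd {α : Fin r → ℝ} (hα : ∀ i, 0 < α i) {f : MvPowerSeries (Fin r) k}
    (hf : f ≠ 0) : ∃ β, MvPowerSeries.coeff β f ≠ 0 ∧ w α β = wOrd α f := by
  classical
  set a := wOrd α f with ha
  have hne := nonempty_S (α := α) hf
  have hbdd := bddBelow_S hα f
  -- there is an element of S below a + 1
  obtain ⟨x, hxS, hx⟩ := (csInf_lt_iff hbdd hne).mp (show sInf (S α f) < a + 1 by
    rw [← wOrd_eq]; linarith)
  -- the truncated set is finite and nonempty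
  have hTfin : (S α f ∩ Set.Iic (a + 1)).Finite := by
    have : (S α f ∩ Set.Iic (a + 1)) ⊆ (fun β => w α β) '' {β : Fin r →₀ ℕ | w α β ≤ a + 1} := by
      rintro y ⟨⟨β, hβ, rfl⟩, hy⟩
      exact ⟨β, hy, rfl⟩
    exact Set.Finite.subset (Set.Finite.image _ (finite_le hα (a + 1))) this
  have hTne : (S α f ∩ Set.Iic (a + 1)).Nonempty := ⟨x, hxS, hx.le⟩
  obtain ⟨m, hmT, hmin'⟩ := Set.Finite.exists_minimalFor id _ hTfin hTne
  have hmin : ∀ y ∈ S α f ∩ Set.Iic (a + 1), id y ≤ id m → id m = id y :=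
    fun y hy h => le_antisymm (hmin' hy h) h
  -- m is a lower bound of S
  have hlb : ∀ y ∈ S α f, m ≤ y := by
    intro y hy
    by_cases h : y ≤ a + 1
    · by_contra hlt
      push_neg at hlt
      exact absurd (hmin y ⟨hy, h⟩ hlt.le) (by simpa using hlt.ne')
    · push_neg at h
      exact (hmT.2.trans h.le)
  have : a = m := le_antisymm (csInf_le hbdd hmT.1) (le_csInf hne hlb)
  obtain ⟨β, hβ, hβw⟩ := hmT.1
  exact ⟨β, hβ, by rw [← hβw, ← this]⟩

end InitFormAux

open InitFormAux in
/-- **Multiplicativity of initial forms.**  Let `k` be a field, `r ≥ 1`, and let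
`α : Fin r → ℝ` have positive entries.  For nonzero `f, g : MvPowerSeries (Fin r) k`,
the α-initial form of the product is the product of the α-initial forms:
`in_α(f * g) = in_α(f) * in_α(g)`. -/
theorem initForm_mul
    (k : Type*) [Field k] (r : ℕ) (hr : 0 < r) (α : Fin r → ℝ) (hα : ∀ i, 0 < α i)
    (f g : MvPowerSeries (Fin r) k) (hf : f ≠ 0) (hg : g ≠ 0) :
    initForm α (f * g) = initForm α f * initForm α g := by
  classical
  set a := wOrd α f with ha
  set b := wOrd α g with hb
  -- Step 2: coefficients of the product of initial forms
  have step2 : ∀ β : Fin r →₀ ℕ,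
      MvPowerSeries.coeff β (initForm α f * initForm α g) =
        if w α β = a + b then MvPowerSeries.coeff β (f * g) else 0 := by
    intro β
    rw [MvPowerSeries.coeff_mul, MvPowerSeries.coeff_mul]
    by_cases hw : w α β = a + b
    · rw [if_pos hw]
      refine Finset.sum_congr rfl fun p hp => ?_
      rw [Finset.HasAntidiagonal.mem_antidiagonal] at hp
      have hsum : w α p.1 + w α p.2 = a + b := by rw [← w_add, hp, hw]
      rw [coeff_initForm, coeff_initForm]
      by_cases h1 : MvPowerSeries.coeff p.1 f = 0
      · simp [h1]
      by_cases h2 : MvPowerSeries.coeff p.2 g = 0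
      · simp [h2]
      have hle1 := wOrd_le hα h1
      have hle2 := wOrd_le hα h2
      have e1 : w α p.1 = a := by rw [ha]; linarith
      have e2 : w α p.2 = b := by rw [hb]; linarith
      rw [if_pos (e1.trans ha), if_pos (e2.trans hb)]
    · rw [if_neg hw]
      refine Finset.sum_eq_zero fun p hp => ?_
      rw [Finset.HasAntidiagonal.mem_antidiagonal] at hp
      rw [coeff_initForm, coeff_initForm]
      by_cases e1 : w α p.1 = wOrd α f
      · by_cases e2 : w α p.2 = wOrd α g
        · exfalso
          apply hw
          rw [← hp, w_add, e1, e2, ha, hb]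
        · rw [if_neg e2, mul_zero]
      · rw [if_neg e1, zero_mul]
  -- Step 1: low coefficients of f * g vanish
  have step1 : ∀ β : Fin r →₀ ℕ, w α β < a + b → MvPowerSeries.coeff β (f * g) = 0 := by
    intro β hwβ
    rw [MvPowerSeries.coeff_mul]
    refine Finset.sum_eq_zero fun p hp => ?_
    rw [Finset.HasAntidiagonal.mem_antidiagonal] at hp
    have hsum : w α p.1 + w α p.2 = w α β := by rw [← w_add, hp]
    by_cases h1 : MvPowerSeries.coeff p.1 f = 0
    · rw [h1, zero_mul]
    have hle1 := wOrd_le hα h1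
    have : w α p.2 < b := by rw [hb]; linarith
    rw [coeff_eq_zero_of_lt hα this, mul_zero]
  -- the product of initial forms is nonzero
  have hifg : initForm α f * initForm α g ≠ 0 := by
    have h1 : initForm α f ≠ 0 := by
      obtain ⟨β, hβ, hβw⟩ := exists_wOrd hα hf
      intro h
      have := coeff_initForm α f β
      rw [h, if_pos hβw] at this
      simp at this
      exact hβ this.symm
    have h2 : initForm α g ≠ 0 := by
      obtain ⟨β, hβ, hβw⟩ := exists_wOrd hα hg
      intro h
      have := coeff_initForm α g β
      rw [h, if_pos hβw] at this
      simp at this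
      exact hβ this.symm
    exact mul_ne_zero h1 h2
  -- Step 3: wOrd (f * g) = a + b
  have step3 : wOrd α (f * g) = a + b := by
    obtain ⟨β, hβ⟩ : ∃ β, MvPowerSeries.coeff β (initForm α f * initForm α g) ≠ 0 := by
      by_contra h
      push_neg at h
      exact hifg (MvPowerSeries.ext fun β => by simp [h β])
    have h2 := step2 β
    have hwβ : w α β = a + b := by
      by_contra h
      rw [if_neg h] at h2
      exact hβ h2
    rw [if_pos hwβ] at h2
    have hmem : a + b ∈ S α (f * g) := ⟨β, h2 ▸ hβ, hwβ.symm⟩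
    have hlb : ∀ y ∈ S α (f * g), a + b ≤ y := by
      rintro y ⟨γ, hγ, rfl⟩
      by_contra hlt
      push_neg at hlt
      exact hγ (step1 γ hlt)
    exact le_antisymm (csInf_le (bddBelow_S hα _) hmem) (le_csInf ⟨_, hmem⟩ hlb)
  -- Step 4: conclude
  apply MvPowerSeries.ext
  intro β
  rw [step2 β, coeff_initForm, step3]
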